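/- Let m ≥ 3 be an integer that is either odd or congruent to 2 modulo 4. Then the stabilizer of Φ_m under the multiplication action of (ℤ/mℤ)^× on subsets of itself is trivial: if u ∈ (ℤ/mℤ)^× satisfies uΦ_m = Φ_m, then u = 1. -/

import Mathlib

/-- For `m ≥ 3`, `Phi m ⊆ (ZMod m)ˣ` is the set of units whose least positive residue is at
most `⌊(m-1)/2⌋`; this is the CM type `Φ_m` of the largest simple isogeny factor of the
Jacobian of `y² = xᵐ + 1`. -/
def Phi (m : ℕ) : Set (ZMod m)ˣ :=
  {a : (ZMod m)ˣ | ((a : ZMod m)).val ≤ (m - 1) / 2}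

private lemma stepOdd (m v w v' w' : ℕ) (hm : 3 ≤ m) (hmo : m % 2 = 1)
    (hv1 : 1 ≤ v) (hv2 : v < m) (hw1 : 1 ≤ w) (hw2 : w < m)
    (hv'1 : 1 ≤ v') (hv'2 : v' < m) (hw'1 : 1 ≤ w') (hw'2 : w' < m)
    (hdv : m ∣ 2 * v' + v) (hdw : m ∣ 2 * w' + w)
    (hiff' : v' ≤ (m - 1) / 2 ↔ w' ≤ (m - 1) / 2) :
    2 * v' + v = 2 * w' + w := by
  obtain ⟨k, hk⟩ := hdv
  obtain ⟨k', hk'⟩ := hdw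
  have h1 : 2 * v' + v < m * 3 := by omega
  have h2 : 2 * w' + w < m * 3 := by omega
  rw [hk] at h1
  rw [hk'] at h2
  have hk3 : k < 3 := Nat.lt_of_mul_lt_mul_left h1
  have hk'3 : k' < 3 := Nat.lt_of_mul_lt_mul_left h2
  interval_cases k <;> interval_cases k' <;> omega

private lemma stepEven (m n v w v' w' : ℕ) (hm : 6 ≤ m) (hm4 : m % 4 = 2) (hn : m = 2 * n)
    (hv1 : 1 ≤ v) (hv2 : v < m) (hw1 : 1 ≤ w) (hw2 : w < m)
    (hv'1 : 1 ≤ v') (hv'2 : v' < m) (hw'1 : 1 ≤ w') (hw'2 : w' < m)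
    (hvo : v % 2 = 1) (hwo : w % 2 = 1) (hv'o : v' % 2 = 1) (hw'o : w' % 2 = 1)
    (hdv : m ∣ 2 * v' + (m - v) + (m - n)) (hdw : m ∣ 2 * w' + (m - w) + (m - n))
    (hiff : v ≤ (m - 1) / 2 ↔ w ≤ (m - 1) / 2)
    (hiff' : v' ≤ (m - 1) / 2 ↔ w' ≤ (m - 1) / 2) :
    2 * v' + (m - v) = 2 * w' + (m - w) := by
  obtain ⟨k, hk⟩ := hdv
  obtain ⟨k', hk'⟩ := hdw
  have h1 : 2 * v' + (m - v) + (m - n) < m * 4 := by omega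
  have h2 : 2 * w' + (m - w) + (m - n) < m * 4 := by omega
  rw [hk] at h1
  rw [hk'] at h2
  have hk3 : k < 4 := Nat.lt_of_mul_lt_mul_left h1
  have hk'3 : k' < 4 := Nat.lt_of_mul_lt_mul_left h2
  interval_cases k <;> interval_cases k' <;> omega

/-- Lemma 3.2.1, first case. Let `m ≥ 3` be odd or congruent to `2` mod `4`.
Then the stabilizer of `Φ_m` under the multiplication action of `(ℤ/mℤ)ˣ` is trivial:
if `u • Φ_m = Φ_m` then `u = 1`. -/
theorem phi_stabilizer_trivial (m : ℕ) (hm : 3 ≤ m) (hcase : Odd m ∨ m % 4 = 2)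
    (u : (ZMod m)ˣ) (hstab : (fun a : (ZMod m)ˣ => u * a) '' Phi m = Phi m) :
    u = 1 := by
  haveI : NeZero m := ⟨by omega⟩
  haveI : Fact (1 < m) := ⟨by omega⟩
  -- the stabilizer condition as an iff
  have key : ∀ a : (ZMod m)ˣ, u * a ∈ Phi m ↔ a ∈ Phi m := by
    intro a
    constructor
    · intro h
      rw [← hstab] at h
      obtain ⟨b, hb, hba⟩ := h
      have hb' : b = a := mul_left_cancel hba
      rwa [← hb']
    · intro h
      rw [← hstab]
      exact ⟨a, h, rfl⟩
  -- basic facts about values of units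
  have val1 : ∀ x : (ZMod m)ˣ, 1 ≤ ((x : ZMod m)).val := by
    intro x
    have hx : (x : ZMod m) ≠ 0 := x.ne_zero
    have hx2 : ((x : ZMod m)).val ≠ 0 := fun h => hx ((ZMod.val_eq_zero _).mp h)
    omega
  have vallt : ∀ x : (ZMod m)ˣ, ((x : ZMod m)).val < m := fun x => ZMod.val_lt _
  -- existence of the "halving" unit q
  have hex : ∃ q : (ZMod m)ˣ, ∀ x y : (ZMod m)ˣ,
      (x ∈ Phi m ↔ y ∈ Phi m) → ((q * x) ∈ Phi m ↔ (q * y) ∈ Phi m) →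
      ((((x : ZMod m)).val : ℤ) - (((y : ZMod m)).val : ℤ)).natAbs
        = 2 * (((((q * x : (ZMod m)ˣ) : ZMod m)).val : ℤ)
            - ((((q * y : (ZMod m)ˣ) : ZMod m)).val : ℤ)).natAbs := by
    rcases hcase with hodd | h42
    · -- odd case : q := (m-1)/2, so that 2q ≡ -1 (mod m)
      have hmo : m % 2 = 1 := Nat.odd_iff.mp hodd
      have hc : Nat.Coprime ((m - 1) / 2) m := by
        have hg1 : Nat.gcd ((m - 1) / 2) m ∣ (m - 1) / 2 := Nat.gcd_dvd_left _ _
        have hg2 : Nat.gcd ((m - 1) / 2) m ∣ m := Nat.gcd_dvd_right _ _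
        have h3 : Nat.gcd ((m - 1) / 2) m ∣ m - 1 := by
          exact hg1.trans ⟨2, by omega⟩
        have h4 := Nat.dvd_sub hg2 h3
        have h5 : m - (m - 1) = 1 := by omega
        rw [h5] at h4
        exact Nat.dvd_one.mp h4
      refine ⟨ZMod.unitOfCoprime _ hc, ?_⟩
      set q : (ZMod m)ˣ := ZMod.unitOfCoprime _ hc with hqdef
      have h2q : (2 : ZMod m) * (q : ZMod m) = -1 := by
        rw [hqdef, ZMod.coe_unitOfCoprime]
        have e1 : (2 : ZMod m) * (((m - 1) / 2 : ℕ) : ZMod m) = ((2 * ((m - 1) / 2) : ℕ) : ZMod m) := by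
          push_cast
          ring
        rw [e1]
        have e2 : 2 * ((m - 1) / 2) = m - 1 := by omega
        rw [e2, Nat.cast_sub (by omega : 1 ≤ m), ZMod.natCast_self]
        ring
      have hdvd : ∀ x : (ZMod m)ˣ,
          m ∣ 2 * (((q * x : (ZMod m)ˣ) : ZMod m)).val + ((x : ZMod m)).val := by
        intro x
        have hkey : (((2 * (((q * x : (ZMod m)ˣ) : ZMod m)).val + ((x : ZMod m)).val : ℕ)) : ZMod m) = 0 := by
          push_cast
          rw [ZMod.natCast_zmod_val, ZMod.natCast_zmod_val]
          linear_combination ((x : ZMod m)) * h2q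
        exact (ZMod.natCast_eq_zero_iff _ _).mp hkey
      intro x y hxy hxy'
      have hs := stepOdd m ((x : ZMod m)).val ((y : ZMod m)).val
        (((q * x : (ZMod m)ˣ) : ZMod m)).val (((q * y : (ZMod m)ˣ) : ZMod m)).val
        hm hmo (val1 x) (vallt x) (val1 y) (vallt y)
        (val1 (q * x)) (vallt (q * x)) (val1 (q * y)) (vallt (q * y))
        (hdvd x) (hdvd y) hxy'
      omega
    · -- even case : m ≡ 2 (mod 4); q with 2q ≡ m/2 + 1 (mod m)
      have hm6 : 6 ≤ m := by omega
      obtain ⟨c, hcodd, hccop, h2c⟩ : ∃ c : ℕ, c % 2 = 1 ∧ Nat.Coprime c m ∧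
          (2 * c = m / 2 + 1 ∨ 2 * c = m + (m / 2 + 1)) := by
        have h8 : m % 8 = 2 ∨ m % 8 = 6 := by omega
        rcases h8 with h8 | h8
        · refine ⟨(m + 2) / 4, by omega, ?_, Or.inl (by omega)⟩
          have hg1 : Nat.gcd ((m + 2) / 4) m ∣ (m + 2) / 4 := Nat.gcd_dvd_left _ _
          have hg2 : Nat.gcd ((m + 2) / 4) m ∣ m := Nat.gcd_dvd_right _ _
          have h3 : Nat.gcd ((m + 2) / 4) m ∣ m + 2 := by
            exact hg1.trans ⟨4, by omega⟩
          have h4 := Nat.dvd_sub h3 hg2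
          have h5 : m + 2 - m = 2 := by omega
          rw [h5] at h4
          rcases (Nat.prime_two.eq_one_or_self_of_dvd _ h4) with h6 | h6
          · exact h6
          · exfalso
            obtain ⟨t, ht⟩ := hg1
            rw [h6] at ht
            omega
        · refine ⟨(3 * m + 2) / 4, by omega, ?_, Or.inr (by omega)⟩
          have hg1 : Nat.gcd ((3 * m + 2) / 4) m ∣ (3 * m + 2) / 4 := Nat.gcd_dvd_left _ _
          have hg2 : Nat.gcd ((3 * m + 2) / 4) m ∣ m := Nat.gcd_dvd_right _ _
          have h3 : Nat.gcd ((3 * m + 2) / 4) m ∣ 3 * m + 2 := by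
            exact hg1.trans ⟨4, by omega⟩
          have h4 := Nat.dvd_sub h3 (Dvd.dvd.mul_left hg2 3)
          have h5 : 3 * m + 2 - 3 * m = 2 := by omega
          rw [h5] at h4
          rcases (Nat.prime_two.eq_one_or_self_of_dvd _ h4) with h6 | h6
          · exact h6
          · exfalso
            obtain ⟨t, ht⟩ := hg1
            rw [h6] at ht
            omega
      refine ⟨ZMod.unitOfCoprime _ hccop, ?_⟩
      set q : (ZMod m)ˣ := ZMod.unitOfCoprime _ hccop with hqdef
      have h2q : (2 : ZMod m) * (q : ZMod m) = ((m / 2 + 1 : ℕ) : ZMod m) := by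
        rw [hqdef, ZMod.coe_unitOfCoprime]
        have e1 : (2 : ZMod m) * ((c : ℕ) : ZMod m) = ((2 * c : ℕ) : ZMod m) := by
          push_cast
          ring
        rw [e1]
        rcases h2c with h | h
        · rw [h]
        · rw [h, Nat.cast_add, ZMod.natCast_self, zero_add]
      -- values of units are odd
      have hvodd : ∀ x : (ZMod m)ˣ, ((x : ZMod m)).val % 2 = 1 := by
        intro x
        have hco := ZMod.val_coe_unit_coprime x
        by_contra hcon
        have h2v : (2 : ℕ) ∣ ((x : ZMod m)).val := by omega
        have h2m : (2 : ℕ) ∣ m := by omega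
        have hd := Nat.dvd_gcd h2v h2m
        rw [Nat.Coprime] at hco
        rw [hco] at hd
        omega
      have hdvd : ∀ x : (ZMod m)ˣ,
          m ∣ 2 * (((q * x : (ZMod m)ˣ) : ZMod m)).val + (m - ((x : ZMod m)).val) + (m - m / 2) := by
        intro x
        have hxlt : ((x : ZMod m)).val ≤ m := (vallt x).le
        have hnle : m / 2 ≤ m := by omega
        have hnx : ((m / 2 : ℕ) : ZMod m) * ((x : ZMod m)) = ((m / 2 : ℕ) : ZMod m) := by
          have hmod : (m / 2) * ((x : ZMod m)).val ≡ (m / 2) * 1 [MOD (m / 2) * 2] :=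
            Nat.ModEq.mul_left' (m / 2) (show ((x : ZMod m)).val ≡ 1 [MOD 2] by
              have := hvodd x
              unfold Nat.ModEq
              omega)
          have hm2 : (m / 2) * 2 = m := by omega
          rw [hm2] at hmod
          have := (ZMod.natCast_eq_natCast_iff _ _ _).mpr hmod
          push_cast at this
          rw [ZMod.natCast_zmod_val] at this
          simpa using this
        have hkey : (((2 * (((q * x : (ZMod m)ˣ) : ZMod m)).val
            + (m - ((x : ZMod m)).val) + (m - m / 2) : ℕ)) : ZMod m) = 0 := by
          push_cast [Nat.cast_sub hxlt, Nat.cast_sub hnle]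
          rw [ZMod.natCast_zmod_val, ZMod.natCast_zmod_val, ZMod.natCast_self]
          push_cast at h2q
          linear_combination ((x : ZMod m)) * h2q + hnx
        exact (ZMod.natCast_eq_zero_iff _ _).mp hkey
      intro x y hxy hxy'
      have hs := stepEven m (m / 2) ((x : ZMod m)).val ((y : ZMod m)).val
        (((q * x : (ZMod m)ˣ) : ZMod m)).val (((q * y : (ZMod m)ˣ) : ZMod m)).val
        hm6 h42 (by omega) (val1 x) (vallt x) (val1 y) (vallt y)
        (val1 (q * x)) (vallt (q * x)) (val1 (q * y)) (vallt (q * y))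
        (hvodd x) (hvodd y) (hvodd (q * x)) (hvodd (q * y))
        (hdvd x) (hdvd y) hxy hxy'
      have hx2 : ((x : ZMod m)).val < m := vallt x
      have hy2 : ((y : ZMod m)).val < m := vallt y
      omega
  obtain ⟨q, hq⟩ := hex
  have hiffk : ∀ k : ℕ, ((q ^ k * u : (ZMod m)ˣ) ∈ Phi m ↔ (q ^ k : (ZMod m)ˣ) ∈ Phi m) := by
    intro k
    rw [mul_comm]
    exact key (q ^ k)
  have hNstep : ∀ k : ℕ,
      ((((q ^ k * u : (ZMod m)ˣ) : ZMod m).val : ℤ) - (((q ^ k : (ZMod m)ˣ) : ZMod m)).val).natAbs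
      = 2 * ((((q ^ (k + 1) * u : (ZMod m)ˣ) : ZMod m).val : ℤ)
          - (((q ^ (k + 1) : (ZMod m)ˣ) : ZMod m)).val).natAbs := by
    intro k
    have e1 : q * (q ^ k * u) = q ^ (k + 1) * u := by rw [pow_succ', mul_assoc]
    have e2 : q * q ^ k = q ^ (k + 1) := (pow_succ' q k).symm
    have h1 := hq (q ^ k * u) (q ^ k) (hiffk k) (by rw [e1, e2]; exact hiffk (k + 1))
    rw [e1, e2] at h1
    exact h1
  have hN0 : ∀ k : ℕ,
      ((((u : (ZMod m)) ).val : ℤ) - (((1 : (ZMod m)ˣ) : ZMod m)).val).natAbs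
      = 2 ^ k * ((((q ^ k * u : (ZMod m)ˣ) : ZMod m).val : ℤ)
          - (((q ^ k : (ZMod m)ˣ) : ZMod m)).val).natAbs := by
    intro k
    induction k with
    | zero => simp
    | succ n ih =>
      rw [ih, hNstep n, pow_succ]
      ring
  have hzero : ((((q ^ m * u : (ZMod m)ˣ) : ZMod m).val : ℤ)
      - (((q ^ m : (ZMod m)ˣ) : ZMod m)).val).natAbs = 0 := by
    by_contra h
    have h1 := hN0 m
    have h2 : 2 ^ m * 1 ≤ 2 ^ m * ((((q ^ m * u : (ZMod m)ˣ) : ZMod m).val : ℤ)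
        - (((q ^ m : (ZMod m)ˣ) : ZMod m)).val).natAbs :=
      Nat.mul_le_mul_left _ (by omega)
    have h3 : m < 2 ^ m := Nat.lt_two_pow_self
    have h4 : ((u : ZMod m)).val < m := ZMod.val_lt _
    have h5 : (((1 : (ZMod m)ˣ) : ZMod m)).val < m := ZMod.val_lt _
    omega
  have hval : (((q ^ m * u : (ZMod m)ˣ) : ZMod m)).val = (((q ^ m : (ZMod m)ˣ) : ZMod m)).val := by
    omega
  have hunit : q ^ m * u = q ^ m := Units.ext (ZMod.val_injective m hval)
  have : q ^ m * u = q ^ m * 1 := by rw [mul_one]; exact hunit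
  exact mul_left_cancel this
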